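/- Let r_1 \geq \cdots \geq r_n > 0 with r_1 r_n = 1, and let f(x) = (\sum_{k=1}^n r_k/(x^2+r_k)^2)^{1/2}. Then \sqrt{n}\, r_n \leq (1/\pi)\int_{-\infty}^\infty f(x)\,dx \leq \sqrt{n}\, r_1. -/

import Mathlib

open MeasureTheory Real

lemma aux_integrable (c : ℝ) (hc : 0 < c) :
    Integrable (fun x : ℝ => 1 / (x ^ 2 + c)) := by
  have hsc : (0:ℝ) < Real.sqrt c := Real.sqrt_pos.2 hc
  have key : (fun x : ℝ => 1 / (x ^ 2 + c)) =
      fun x : ℝ => c⁻¹ * (1 + ((Real.sqrt c)⁻¹ * x) ^ 2)⁻¹ := by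
    funext x
    have hcs : Real.sqrt c ^ 2 = c := Real.sq_sqrt hc.le
    field_simp
    ring_nf
    rw [hcs]
  rw [key]
  exact (integrable_inv_one_add_sq.comp_mul_left' (inv_ne_zero hsc.ne')).const_mul _

lemma aux_integral (c : ℝ) (hc : 0 < c) :
    ∫ x : ℝ, 1 / (x ^ 2 + c) = Real.pi / Real.sqrt c := by
  have hsc : (0:ℝ) < Real.sqrt c := Real.sqrt_pos.2 hc
  have hcs : Real.sqrt c ^ 2 = c := Real.sq_sqrt hc.le
  have key : (fun x : ℝ => 1 / (x ^ 2 + c)) =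
      fun x : ℝ => c⁻¹ * (1 + ((Real.sqrt c)⁻¹ * x) ^ 2)⁻¹ := by
    funext x
    field_simp
    ring_nf
    rw [hcs]
  rw [key, MeasureTheory.integral_const_mul,
    MeasureTheory.Measure.integral_comp_mul_left (fun y : ℝ => (1 + y ^ 2)⁻¹) (Real.sqrt c)⁻¹,
    integral_univ_inv_one_add_sq]
  rw [inv_inv, abs_of_pos hsc, smul_eq_mul]
  rw [eq_div_iff hsc.ne']
  field_simp
  linear_combination hcs

theorem integral_density_bounds
    (n : ℕ) (hn : 0 < n) (r : Fin n → ℝ) (hr : ∀ k, 0 < r k)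
    (hmono : ∀ k l : Fin n, k ≤ l → r l ≤ r k)
    (hprod : r ⟨0, hn⟩ * r ⟨n - 1, by omega⟩ = 1)
    (f : ℝ → ℝ)
    (hf : f = fun x => Real.sqrt (∑ k : Fin n, r k / (x ^ 2 + r k) ^ 2)) :
    Real.sqrt n * r ⟨n - 1, by omega⟩ ≤ (1 / Real.pi) * ∫ x : ℝ, f x ∧
    (1 / Real.pi) * (∫ x : ℝ, f x) ≤ Real.sqrt n * r ⟨0, hn⟩ := by
  set s := r ⟨0, hn⟩ with hs_def
  set t := r ⟨n - 1, by omega⟩ with ht_def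
  have hs : 0 < s := hr _
  have ht : 0 < t := hr _
  have hks : ∀ k, r k ≤ s := fun k => hmono ⟨0, hn⟩ k (by simp [Fin.le_def])
  have hkt : ∀ k, t ≤ r k := fun k => hmono k ⟨n - 1, by omega⟩ (by simp [Fin.le_def]; omega)
  have hst : s / t = s ^ 2 := by field_simp; nlinarith [hprod]
  have hts : t / s = t ^ 2 := by field_simp; nlinarith [hprod]
  have hn0 : (0:ℝ) ≤ n := Nat.cast_nonneg n
  have hkpos : ∀ (x : ℝ) (k : Fin n), 0 < x ^ 2 + r k :=
    fun x k => by nlinarith [hr k, sq_nonneg x]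
  -- bounding functions
  set g : ℝ → ℝ := fun x => (Real.sqrt n * Real.sqrt s) * (1 / (x ^ 2 + t)) with hg_def
  set h : ℝ → ℝ := fun x => (Real.sqrt n * Real.sqrt t) * (1 / (x ^ 2 + s)) with hh_def
  have hgpos : ∀ x, 0 ≤ g x := fun x =>
    mul_nonneg (by positivity) (one_div_nonneg.2 (by nlinarith [ht, sq_nonneg x]))
  have hhpos : ∀ x, 0 ≤ h x := fun x =>
    mul_nonneg (by positivity) (one_div_nonneg.2 (by nlinarith [hs, sq_nonneg x]))
  have hub : ∀ x, f x ≤ g x := by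
    intro x
    have hxt : (0:ℝ) < x ^ 2 + t := by positivity
    have hsum : (∑ k : Fin n, r k / (x ^ 2 + r k) ^ 2) ≤ (n : ℝ) * (s / (x ^ 2 + t) ^ 2) := by
      calc (∑ k : Fin n, r k / (x ^ 2 + r k) ^ 2)
          ≤ ∑ k : Fin n, s / (x ^ 2 + t) ^ 2 := by
            apply Finset.sum_le_sum
            intro k _
            gcongr <;> first | exact hks k | exact hkt k | exact (hr k).le | exact ht.le | exact pow_pos (hkpos x k) 2 | exact (hkpos x k).le | positivity
        _ = (n : ℝ) * (s / (x ^ 2 + t) ^ 2) := by simp [mul_comm]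
    have hgsq : g x ^ 2 = (n : ℝ) * (s / (x ^ 2 + t) ^ 2) := by
      have h1 : Real.sqrt n ^ 2 = (n : ℝ) := Real.sq_sqrt hn0
      have h2 : Real.sqrt s ^ 2 = s := Real.sq_sqrt hs.le
      rw [hg_def]
      field_simp
      nlinarith [h1, h2]
    rw [hf]
    calc Real.sqrt (∑ k : Fin n, r k / (x ^ 2 + r k) ^ 2)
        ≤ Real.sqrt (g x ^ 2) := Real.sqrt_le_sqrt (by rw [hgsq]; exact hsum)
      _ = g x := Real.sqrt_sq (hgpos x)
  have hlb : ∀ x, h x ≤ f x := by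
    intro x
    have hxs : (0:ℝ) < x ^ 2 + s := by positivity
    have hsum : (n : ℝ) * (t / (x ^ 2 + s) ^ 2) ≤ ∑ k : Fin n, r k / (x ^ 2 + r k) ^ 2 := by
      calc (n : ℝ) * (t / (x ^ 2 + s) ^ 2)
          = ∑ _k : Fin n, t / (x ^ 2 + s) ^ 2 := by simp [mul_comm]
        _ ≤ ∑ k : Fin n, r k / (x ^ 2 + r k) ^ 2 := by
            apply Finset.sum_le_sum
            intro k _
            gcongr <;> first | exact hks k | exact hkt k | exact (hr k).le | exact ht.le | exact pow_pos (hkpos x k) 2 | exact (hkpos x k).le | positivity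
    have hhsq : h x ^ 2 = (n : ℝ) * (t / (x ^ 2 + s) ^ 2) := by
      have h1 : Real.sqrt n ^ 2 = (n : ℝ) := Real.sq_sqrt hn0
      have h2 : Real.sqrt t ^ 2 = t := Real.sq_sqrt ht.le
      rw [hh_def]
      field_simp
      nlinarith [h1, h2]
    rw [hf]
    calc h x = Real.sqrt (h x ^ 2) := (Real.sqrt_sq (hhpos x)).symm
      _ ≤ Real.sqrt (∑ k : Fin n, r k / (x ^ 2 + r k) ^ 2) :=
          Real.sqrt_le_sqrt (by rw [hhsq]; exact hsum)
  -- integrability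
  have hgint : Integrable g := (aux_integrable t ht).const_mul _
  have hhint : Integrable h := (aux_integrable s hs).const_mul _
  have hfcont : Continuous f := by
    rw [hf]
    apply Continuous.sqrt
    apply continuous_finset_sum
    intro k _
    apply continuous_const.div
    · fun_prop
    · intro x
      exact pow_ne_zero 2 (hkpos x k).ne'
  have hfnonneg : ∀ x, 0 ≤ f x := by intro x; rw [hf]; exact Real.sqrt_nonneg _
  have hfint : Integrable f := by
    apply hgint.mono hfcont.aestronglyMeasurable
    filter_upwards with x
    rw [Real.norm_of_nonneg (hfnonneg x), Real.norm_of_nonneg (hgpos x)]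
    exact hub x
  -- integral values
  have hss : Real.sqrt s / Real.sqrt t = s := by
    rw [← Real.sqrt_div hs.le, hst, Real.sqrt_sq hs.le]
  have htt : Real.sqrt t / Real.sqrt s = t := by
    rw [← Real.sqrt_div ht.le, hts, Real.sqrt_sq ht.le]
  have hIg : ∫ x : ℝ, g x = Real.sqrt n * Real.pi * s := by
    rw [hg_def, MeasureTheory.integral_const_mul, aux_integral t ht]
    calc Real.sqrt n * Real.sqrt s * (Real.pi / Real.sqrt t)
        = Real.sqrt n * Real.pi * (Real.sqrt s / Real.sqrt t) := by ring
      _ = Real.sqrt n * Real.pi * s := by rw [hss]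
  have hIh : ∫ x : ℝ, h x = Real.sqrt n * Real.pi * t := by
    rw [hh_def, MeasureTheory.integral_const_mul, aux_integral s hs]
    calc Real.sqrt n * Real.sqrt t * (Real.pi / Real.sqrt s)
        = Real.sqrt n * Real.pi * (Real.sqrt t / Real.sqrt s) := by ring
      _ = Real.sqrt n * Real.pi * t := by rw [htt]
  have hπ : (0:ℝ) < Real.pi := Real.pi_pos
  constructor
  · have h1 : ∫ x, h x ≤ ∫ x, f x := integral_mono hhint hfint hlb
    rw [hIh] at h1
    calc Real.sqrt n * t = (1 / Real.pi) * (Real.sqrt n * Real.pi * t) := by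
          field_simp
      _ ≤ (1 / Real.pi) * ∫ x, f x := by gcongr
  · have h2 : ∫ x, f x ≤ ∫ x, g x := integral_mono hfint hgint hub
    rw [hIg] at h2
    calc (1 / Real.pi) * ∫ x, f x ≤ (1 / Real.pi) * (Real.sqrt n * Real.pi * s) := by gcongr
      _ = Real.sqrt n * s := by field_simp
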